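/- Let m ≥ 1 be an integer, let f = (1/m, …, 1/m) ∈ ℚ^{2m}, let N ⊆ ℚ^{2m} be the subgroup generated by the standard basis vectors e_1, …, e_{2m} and f, and let P ⊆ ℝ^{2m} be the convex hull of {e_1, …, e_{2m}, e_1 − f, …, e_{2m} − f}. Then P is reflexive with respect to N: 0 lies in the interior of P, all vertices of P lie in N, and the polar P° = {y ∈ ℝ^{2m} : ⟨x, y⟩ ≤ 1 for all x ∈ P} is the convex hull of a finite subset of the dual lattice M = {u ∈ ℚ^{2m} : ⟨u, v⟩ ∈ ℤ for all v ∈ N}. -/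

import Mathlib

open Pointwise

namespace Stmt12Aux

def RR (m : ℕ) : (Fin (2*m) → ℚ) → (Fin (2*m) → ℝ) := fun q i => (q i : ℝ)

def onesQ (m : ℕ) : Fin (2*m) → ℚ := fun _ => 1

def vQ (m : ℕ) (i : Fin (2*m)) : Fin (2*m) → ℚ := fun j => if j = i then 1 - 2*m else 1

def TT (m : ℕ) : Finset (Fin (2*m) → ℚ) :=
  insert (onesQ m) (insert (-onesQ m) (Finset.image (vQ m) Finset.univ))

lemma RR_single (m : ℕ) (j k : Fin (2*m)) :
    RR m (Pi.single j 1) k = if k = j then 1 else 0 := by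
  simp [RR, Pi.single_apply, apply_ite (fun q : ℚ => (q:ℝ))]

lemma pair_single (m : ℕ) (j : Fin (2*m)) (y : Fin (2*m) → ℝ) :
    ∑ i, RR m (Pi.single j 1) i * y i = y j := by
  simp [RR_single, ite_mul]

lemma RR_single_sub (m : ℕ) (j k : Fin (2*m)) :
    RR m (Pi.single j 1 - fun _ => (m:ℚ)⁻¹) k = (if k = j then 1 else 0) - (m:ℝ)⁻¹ := by
  simp [RR, Pi.single_apply, apply_ite (fun q : ℚ => (q:ℝ))]

lemma pair_single_sub (m : ℕ) (j : Fin (2*m)) (y : Fin (2*m) → ℝ) :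
    ∑ i, RR m (Pi.single j 1 - fun _ => (m:ℚ)⁻¹) i * y i = y j - (m:ℝ)⁻¹ * ∑ i, y i := by
  simp only [RR_single_sub, sub_mul, ite_mul, one_mul, zero_mul, Finset.sum_sub_distrib,
    Finset.sum_ite_eq', Finset.mem_univ, if_pos, Finset.mul_sum]

lemma RR_ones (m : ℕ) (k : Fin (2*m)) : RR m (onesQ m) k = 1 := by simp [RR, onesQ]

lemma RR_negOnes (m : ℕ) (k : Fin (2*m)) : RR m (-onesQ m) k = -1 := by simp [RR, onesQ]

lemma RR_vQ (m : ℕ) (i k : Fin (2*m)) :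
    RR m (vQ m i) k = if k = i then 1 - 2*(m:ℝ) else 1 := by
  simp [RR, vQ, apply_ite (fun q : ℚ => (q:ℝ))]

lemma sum_RR_ones (m : ℕ) : ∑ k, RR m (onesQ m) k = 2*(m:ℝ) := by
  simp [RR_ones, Finset.sum_const, Finset.card_univ]

lemma sum_RR_negOnes (m : ℕ) : ∑ k, RR m (-onesQ m) k = -(2*(m:ℝ)) := by
  simp [RR_negOnes, Finset.sum_const, Finset.card_univ]

lemma sum_RR_vQ (m : ℕ) (i : Fin (2*m)) : ∑ k, RR m (vQ m i) k = 0 := by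
  classical
  have h : ∀ k, RR m (vQ m i) k = 1 + (if k = i then -(2*(m:ℝ)) else 0) := by
    intro k; by_cases h : k = i <;> simp [RR_vQ, h] <;> ring
  rw [Finset.sum_congr rfl (fun k _ => h k), Finset.sum_add_distrib, Finset.sum_ite_eq']
  simp [Finset.sum_const, Finset.card_univ]

lemma sum_onesQ (m : ℕ) : ∑ j, onesQ m j = (m:ℚ) * 2 := by
  simp [onesQ, Finset.sum_const, Finset.card_univ]; ring

lemma sum_negOnesQ (m : ℕ) : ∑ j, (-onesQ m) j = (m:ℚ) * (-2) := by
  simp [onesQ, Finset.sum_const, Finset.card_univ]; ring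

lemma sum_vQ (m : ℕ) (i : Fin (2*m)) : ∑ j, vQ m i j = 0 := by
  classical
  have h : ∀ j, vQ m i j = 1 + (if j = i then -(2*m : ℚ) else 0) := by
    intro j; by_cases h : j = i <;> simp [vQ, h] <;> ring
  rw [Finset.sum_congr rfl (fun j _ => h j), Finset.sum_add_distrib,
    Finset.sum_ite_eq']
  simp [Finset.sum_const, Finset.card_univ]

lemma pairing_int (m : ℕ) (hm : 1 ≤ m) (u : Fin (2*m) → ℚ)
    (hu1 : ∀ j, ∃ k : ℤ, u j = k) (hu2 : ∃ k : ℤ, ∑ j, u j = (m:ℚ) * k) :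
    ∀ w ∈ AddSubgroup.closure
      (Set.range (fun j : Fin (2*m) => Pi.single j (1 : ℚ)) ∪ {fun _ => (m:ℚ)⁻¹}),
      ∃ n : ℤ, ∑ i, u i * w i = (n : ℚ) := by
  have hmne : (m:ℚ) ≠ 0 := by positivity
  intro w hw
  induction hw using AddSubgroup.closure_induction with
  | mem x hx =>
    rcases hx with ⟨j, rfl⟩ | hx
    · obtain ⟨k, hk⟩ := hu1 j
      exact ⟨k, by simp [Pi.single_apply, mul_ite, hk]⟩
    · rcases Set.mem_singleton_iff.1 hx with rfl
      obtain ⟨k, hk⟩ := hu2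
      refine ⟨k, ?_⟩
      rw [← Finset.sum_mul]
      rw [hk]; field_simp
  | zero => exact ⟨0, by simp⟩
  | add x y _ _ hx hy =>
    obtain ⟨n1, h1⟩ := hx
    obtain ⟨n2, h2⟩ := hy
    exact ⟨n1 + n2, by push_cast; rw [← h1, ← h2, ← Finset.sum_add_distrib]; simp [mul_add]⟩
  | neg x _ hx =>
    obtain ⟨n1, h1⟩ := hx
    exact ⟨-n1, by push_cast; rw [← h1, ← Finset.sum_neg_distrib]; simp [mul_neg]⟩

lemma lin_pair (n : ℕ) (x : Fin n → ℝ) :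
    IsLinearMap ℝ (fun y : Fin n → ℝ => ∑ i, x i * y i) := by
  constructor
  · intro y z; simp [mul_add, Finset.sum_add_distrib]
  · intro cst y; simp only [Pi.smul_apply, smul_eq_mul, Finset.mul_sum]
    exact Finset.sum_congr rfl (fun i _ => by ring)

lemma lin_pair' (n : ℕ) (x : Fin n → ℝ) :
    IsLinearMap ℝ (fun y : Fin n → ℝ => ∑ i, y i * x i) := by
  have := lin_pair n x
  simpa [mul_comm] using this

lemma mem_TT_ones (m : ℕ) : onesQ m ∈ TT m := Finset.mem_insert_self _ _
lemma mem_TT_negOnes (m : ℕ) : -onesQ m ∈ TT m :=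
  Finset.mem_insert_of_mem (Finset.mem_insert_self _ _)
lemma mem_TT_vQ (m : ℕ) (j : Fin (2*m)) : vQ m j ∈ TT m :=
  Finset.mem_insert_of_mem (Finset.mem_insert_of_mem
    (Finset.mem_image_of_mem _ (Finset.mem_univ j)))

lemma memP (m : ℕ) (hm : 1 ≤ m) (y : Fin (2*m) → ℝ)
    (h1 : ∀ i, |y i| ≤ 1/(4*m)) :
    y ∈ convexHull ℝ (RR m ''
      (Set.range (fun j : Fin (2*m) => Pi.single j (1 : ℚ)) ∪
        Set.range (fun j : Fin (2*m) => Pi.single j (1 : ℚ) - fun _ => (m:ℚ)⁻¹))) := by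
  have hm0 : (0:ℝ) < m := by positivity
  have hn0 : (0:ℝ) < 2*m := by positivity
  set s : ℝ := ∑ i, y i with hs
  have hmne : (m:ℝ) ≠ 0 := ne_of_gt hm0
  have hsle : |s| ≤ 1/2 := by
    calc |s| ≤ ∑ i, |y i| := Finset.abs_sum_le_sum_abs _ _
    _ ≤ ∑ _i : Fin (2*m), (1/(4*(m:ℝ))) := Finset.sum_le_sum (fun i _ => h1 i)
    _ = (2*(m:ℝ)) * (1/(4*(m:ℝ))) := by
        simp only [Finset.sum_const, Finset.card_univ, Fintype.card_fin, nsmul_eq_mul]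
        push_cast; ring
    _ = 1/2 := by field_simp; ring
  set A : ℝ := (1+s)/2 with hA
  set B : ℝ := (1-s)/2 with hB
  set t : Fin (2*m) → ℝ := fun i => y i + (1-s)/(2*m) with ht
  have hAB : A + B = 1 := by rw [hA, hB]; ring
  have hA0 : 0 ≤ A := by rw [hA]; have := abs_le.1 hsle; linarith [this.1]
  have hB0 : 0 ≤ B := by rw [hB]; have := abs_le.1 hsle; linarith [this.2]
  have ht0 : ∀ i, 0 ≤ t i := by
    intro i
    have h1i := abs_le.1 (h1 i)
    have hsl := abs_le.1 hsle
    rw [ht]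
    have : 1/(4*(m:ℝ)) ≤ (1-s)/(2*m) := by
      rw [div_le_div_iff₀ (by positivity) hn0]
      nlinarith [hsl.2]
    linarith [h1i.1]
  have htsum : ∑ i, t i = 1 := by
    rw [ht]
    rw [Finset.sum_add_distrib, Finset.sum_const]
    simp only [Finset.card_univ, Fintype.card_fin, nsmul_eq_mul]
    push_cast
    field_simp
    linarith [hs]
  set w : Fin (2*m) × Bool → ℝ := fun p => (if p.2 then B else A) * t p.1 with hw
  set z : Fin (2*m) × Bool → (Fin (2*m) → ℝ) := fun p =>
    if p.2 then RR m (Pi.single p.1 1 - fun _ => (m:ℚ)⁻¹) else RR m (Pi.single p.1 1) with hz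
  have key : y = ∑ p : Fin (2*m) × Bool, w p • z p := by
    funext k
    have h0 : (∑ p : Fin (2*m) × Bool, w p • z p) k = ∑ p : Fin (2*m) × Bool, w p * z p k := by
      rw [Finset.sum_apply]; simp
    rw [h0, Fintype.sum_prod_type]
    have h1' : ∀ j : Fin (2*m), ∑ b : Bool, w (j, b) * z (j, b) k
        = (A + B) * t j * (if k = j then 1 else 0) - B * t j * (m:ℝ)⁻¹ := by
      intro j
      rw [Fintype.sum_bool]
      simp only [hw, hz, Bool.false_eq_true, if_true, if_false, RR_single, RR_single_sub]
      ring
    rw [Finset.sum_congr rfl (fun j _ => h1' j)]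
    rw [Finset.sum_sub_distrib]
    have e1 : ∑ j, (A + B) * t j * (if k = j then 1 else 0) = (A+B) * t k := by
      simp [mul_ite, mul_zero, mul_one]
    have e2 : ∑ j, B * t j * (m:ℝ)⁻¹ = B * (m:ℝ)⁻¹ := by
      rw [← Finset.sum_mul, ← Finset.mul_sum, htsum]; ring
    rw [e1, e2, hAB, one_mul, ht]
    rw [hB]
    field_simp
    ring
  rw [key]
  apply Convex.sum_mem (convex_convexHull ℝ _)
  · intro p _
    rcases p with ⟨j, b⟩
    cases b
    · simpa [hw] using mul_nonneg hA0 (ht0 j)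
    · simpa [hw] using mul_nonneg hB0 (ht0 j)
  · rw [Fintype.sum_prod_type]
    have h2' : ∀ j : Fin (2*m), ∑ b : Bool, w (j, b) = (A + B) * t j := by
      intro j; rw [Fintype.sum_bool]; simp [hw]; ring
    rw [Finset.sum_congr rfl (fun j _ => h2' j), ← Finset.mul_sum, htsum, hAB]; ring
  · intro p _
    rcases p with ⟨j, b⟩
    apply subset_convexHull
    cases b
    · exact Set.mem_image_of_mem _ (Set.mem_union_left _ ⟨j, rfl⟩)
    · exact Set.mem_image_of_mem _ (Set.mem_union_right _ ⟨j, rfl⟩)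

lemma polar_eq (m : ℕ) (hm : 1 ≤ m)
    (V : Set (Fin (2 * m) → ℚ))
    (hV : V = Set.range (fun j : Fin (2 * m) => Pi.single j (1 : ℚ)) ∪
      Set.range (fun j : Fin (2 * m) => Pi.single j (1 : ℚ) - fun _ => (m:ℚ)⁻¹))
    (P : Set (Fin (2 * m) → ℝ))
    (hP : P = convexHull ℝ (RR m '' V)) :
    {y : Fin (2 * m) → ℝ | ∀ x ∈ P, ∑ i, x i * y i ≤ 1} =
      convexHull ℝ (RR m '' (TT m : Set (Fin (2 * m) → ℚ))) := by
  classical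
  have hm0 : (0:ℝ) < m := by positivity
  have hn0 : (0:ℝ) < 2*m := by positivity
  have hmne : (m:ℝ) ≠ 0 := ne_of_gt hm0
  have hnne : (2*(m:ℝ)) ≠ 0 := ne_of_gt hn0
  apply Set.Subset.antisymm
  · intro y hy
    simp only [Set.mem_setOf_eq] at hy
    have hA : ∀ j, y j ≤ 1 := by
      intro j
      have hx : RR m (Pi.single j 1) ∈ P := by
        rw [hP]
        exact subset_convexHull ℝ _ (Set.mem_image_of_mem _
          (by rw [hV]; exact Set.mem_union_left _ ⟨j, rfl⟩))
      have := hy _ hx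
      rwa [pair_single] at this
    set s : ℝ := ∑ i, y i with hs
    have hB : ∀ j, y j - (m:ℝ)⁻¹ * s ≤ 1 := by
      intro j
      have hx : RR m (Pi.single j 1 - fun _ => (m:ℚ)⁻¹) ∈ P := by
        rw [hP]
        exact subset_convexHull ℝ _ (Set.mem_image_of_mem _
          (by rw [hV]; exact Set.mem_union_right _ ⟨j, rfl⟩))
      have := hy _ hx
      rwa [pair_single_sub] at this
    set b : ℝ := if 0 ≤ s then 0 else -s/(2*m) with hb
    set a : ℝ := b + s/(2*m) with ha
    set c : Fin (2*m) → ℝ := fun k => (1 - 2*b - y k)/(2*m) with hc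
    have hb0 : 0 ≤ b := by
      rw [hb]; split
      · exact le_rfl
      · next h =>
          have hslt : s < 0 := not_le.1 h
          apply div_nonneg (by linarith) (le_of_lt hn0)
    have ha0 : 0 ≤ a := by
      rw [ha, hb]; split
      · next h =>
          have : 0 ≤ s/(2*m) := div_nonneg h (le_of_lt hn0)
          linarith
      · next h =>
          have : -s/(2*m) + s/(2*m) = 0 := by ring
          linarith [this.ge]
    have hc0 : ∀ k, 0 ≤ c k := by
      intro k
      rw [hc]
      apply div_nonneg _ (le_of_lt hn0)
      rw [hb]; split
      · next h => linarith [hA k]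
      · next h =>
          have h2 : 1 - 2*(-s/(2*m)) - y k = 1 + (m:ℝ)⁻¹ * s - y k := by
            field_simp; ring
          rw [h2]
          linarith [hB k]
    have hcsum : ∑ k, c k = 1 - 2*b - s/(2*m) := by
      rw [hc]
      rw [← Finset.sum_div, Finset.sum_sub_distrib, Finset.sum_const, Finset.card_univ,
        Fintype.card_fin, nsmul_eq_mul, ← hs]
      push_cast
      field_simp
    have hwsum : a + b + ∑ k, c k = 1 := by rw [hcsum, ha]; ring
    set w : Option (Option (Fin (2*m))) → ℝ :=
      fun o => o.elim a (fun o' => o'.elim b c) with hw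
    set z : Option (Option (Fin (2*m))) → (Fin (2*m) → ℝ) :=
      fun o => o.elim (RR m (onesQ m))
        (fun o' => o'.elim (RR m (-onesQ m)) (fun j => RR m (vQ m j))) with hz
    have key : y = ∑ o : Option (Option (Fin (2*m))), w o • z o := by
      funext k
      rw [Finset.sum_apply]
      simp only [Pi.smul_apply, smul_eq_mul]
      rw [Fintype.sum_option, Fintype.sum_option]
      simp only [hw, hz, Option.elim]
      rw [RR_ones, RR_negOnes]
      have hterm : ∀ j, c j * RR m (vQ m j) k = c j + (if j = k then -(2*(m:ℝ)) * c j else 0) := by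
        intro j
        by_cases h : j = k
        · subst h; simp [RR_vQ]; ring
        · have h' : ¬ k = j := fun hh => h hh.symm
          simp [RR_vQ, h, h']
      rw [Finset.sum_congr rfl (fun j _ => hterm j), Finset.sum_add_distrib,
        Finset.sum_ite_eq', hcsum]
      simp only [Finset.mem_univ, if_pos, ha, hc]
      field_simp
      ring
    rw [key]
    apply Convex.sum_mem (convex_convexHull ℝ _)
    · intro o _
      rcases o with _ | o'
      · exact ha0
      · rcases o' with _ | j
        · exact hb0
        · exact hc0 j
    · rw [Fintype.sum_option, Fintype.sum_option]
      simp only [hw, Option.elim]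
      linarith [hwsum]
    · intro o _
      apply subset_convexHull
      rcases o with _ | o'
      · exact Set.mem_image_of_mem _ (Finset.mem_coe.2 (mem_TT_ones m))
      · rcases o' with _ | j
        · exact Set.mem_image_of_mem _ (Finset.mem_coe.2 (mem_TT_negOnes m))
        · exact Set.mem_image_of_mem _ (Finset.mem_coe.2 (mem_TT_vQ m j))
  · intro y hy
    simp only [Set.mem_setOf_eq]
    intro x hx
    have hgen : ∀ u ∈ TT m, ∑ i, x i * RR m u i ≤ 1 := by
      intro u hu
      have hconv : Convex ℝ {x' : Fin (2*m) → ℝ | ∑ i, x' i * RR m u i ≤ 1} :=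
        convex_halfSpace_le (lin_pair' (2*m) (RR m u)) 1
      have hsub : RR m '' V ⊆ {x' : Fin (2*m) → ℝ | ∑ i, x' i * RR m u i ≤ 1} := by
        rintro x' ⟨q, hq, rfl⟩
        rw [hV] at hq
        simp only [TT, Finset.mem_insert, Finset.mem_image, Finset.mem_univ,
          true_and] at hu
        rcases hq with ⟨j, rfl⟩ | ⟨j, rfl⟩
        · rw [Set.mem_setOf_eq, pair_single]
          rcases hu with rfl | rfl | ⟨i, rfl⟩
          · rw [RR_ones]
          · rw [RR_negOnes]; linarith
          · rw [RR_vQ]; split <;> linarith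
        · rw [Set.mem_setOf_eq, pair_single_sub]
          rcases hu with rfl | rfl | ⟨i, rfl⟩
          · rw [RR_ones, sum_RR_ones]
            have : (m:ℝ)⁻¹ * (2*m) = 2 := by field_simp
            linarith
          · rw [RR_negOnes, sum_RR_negOnes]
            have : (m:ℝ)⁻¹ * -(2*(m:ℝ)) = -2 := by field_simp
            linarith
          · rw [RR_vQ, sum_RR_vQ]
            split <;> [skip; skip] <;> simp <;> linarith
      have := convexHull_min hsub hconv
      exact this (hP ▸ hx)
    have hconv2 : Convex ℝ {y' : Fin (2*m) → ℝ | ∑ i, x i * y' i ≤ 1} :=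
      convex_halfSpace_le (lin_pair (2*m) x) 1
    have hsub2 : RR m '' (TT m : Set (Fin (2*m) → ℚ)) ⊆
        {y' : Fin (2*m) → ℝ | ∑ i, x i * y' i ≤ 1} := by
      rintro y' ⟨u, hu, rfl⟩
      exact hgen u (Finset.mem_coe.1 hu)
    exact convexHull_min hsub2 hconv2 hy

end Stmt12Aux

/-- For `m ≥ 1`, let `f = (1/m,…,1/m) ∈ ℚ^{2m}`, let
`N = ℤ⟨e₁,…,e_{2m},f⟩ ⊆ ℚ^{2m}`, and let `P ⊆ ℝ^{2m}` be the convex hull of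
`{e₁,…,e_{2m}, e₁-f,…,e_{2m}-f}`. Then `P` is reflexive with respect to `N`: `0` lies in
the interior of `P`, all vertices of `P` lie in `N`, and the polar `P°` is the convex hull
of a finite subset of the dual lattice `M`. -/
theorem stmt_12 (m : ℕ) (hm : 1 ≤ m) (f : Fin (2 * m) → ℚ)
    (hf : f = fun _ => (m : ℚ)⁻¹)
    (N : AddSubgroup (Fin (2 * m) → ℚ))
    (hN : N = AddSubgroup.closure
      (Set.range (fun j : Fin (2 * m) => Pi.single j (1 : ℚ)) ∪ {f}))
    (V : Set (Fin (2 * m) → ℚ))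
    (hV : V = Set.range (fun j : Fin (2 * m) => Pi.single j (1 : ℚ)) ∪
      Set.range (fun j : Fin (2 * m) => Pi.single j (1 : ℚ) - f))
    (P : Set (Fin (2 * m) → ℝ))
    (hP : P = convexHull ℝ ((fun q : Fin (2 * m) → ℚ => fun i => (q i : ℝ)) '' V)) :
    (0 : Fin (2 * m) → ℝ) ∈ interior P ∧
    V ⊆ (N : Set (Fin (2 * m) → ℚ)) ∧
    ∃ T : Finset (Fin (2 * m) → ℚ),
      (∀ u ∈ T, ∀ w ∈ N, ∃ n : ℤ, ∑ i, u i * w i = (n : ℚ)) ∧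
      {y : Fin (2 * m) → ℝ | ∀ x ∈ P, ∑ i, x i * y i ≤ 1} =
        convexHull ℝ ((fun q : Fin (2 * m) → ℚ => fun i => (q i : ℝ)) ''
          (T : Set (Fin (2 * m) → ℚ))) := by
  subst hf
  have hm0 : (0:ℝ) < m := by positivity
  refine ⟨?_, ?_, ?_⟩
  · -- 0 in interior
    rw [mem_interior]
    refine ⟨{y : Fin (2*m) → ℝ | ∀ i, |y i| < 1/(4*m)}, ?_, ?_, ?_⟩
    · intro y hy
      rw [hP, hV]
      exact Stmt12Aux.memP m hm y (fun i => le_of_lt (hy i))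
    · have : {y : Fin (2*m) → ℝ | ∀ i, |y i| < 1/(4*(m:ℝ))} =
          Set.pi Set.univ (fun _ : Fin (2*m) => Metric.ball (0:ℝ) (1/(4*m))) := by
        ext y
        simp [Set.mem_pi, Real.dist_eq]
      rw [this]
      exact isOpen_set_pi Set.finite_univ (fun _ _ => Metric.isOpen_ball)
    · intro i
      simp only [Pi.zero_apply, abs_zero]
      positivity
  · -- V ⊆ N
    rw [hV, hN]
    rintro q (⟨j, rfl⟩ | ⟨j, rfl⟩)
    · exact AddSubgroup.subset_closure (Set.mem_union_left _ ⟨j, rfl⟩)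
    · exact sub_mem
        (AddSubgroup.subset_closure (Set.mem_union_left _ ⟨j, rfl⟩))
        (AddSubgroup.subset_closure (Set.mem_union_right _ rfl))
  · refine ⟨Stmt12Aux.TT m, ?_, ?_⟩
    · intro u hu w hw
      rw [hN] at hw
      refine Stmt12Aux.pairing_int m hm u ?_ ?_ w hw
      · simp only [Stmt12Aux.TT, Finset.mem_insert, Finset.mem_image, Finset.mem_univ,
          true_and] at hu
        rcases hu with rfl | rfl | ⟨i, rfl⟩
        · exact fun j => ⟨1, by simp [Stmt12Aux.onesQ]⟩
        · exact fun j => ⟨-1, by simp [Stmt12Aux.onesQ]⟩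
        · intro j
          by_cases h : j = i
          · exact ⟨1 - 2*m, by simp [Stmt12Aux.vQ, h]⟩
          · exact ⟨1, by simp [Stmt12Aux.vQ, h]⟩
      · simp only [Stmt12Aux.TT, Finset.mem_insert, Finset.mem_image, Finset.mem_univ,
          true_and] at hu
        rcases hu with rfl | rfl | ⟨i, rfl⟩
        · exact ⟨2, by rw [Stmt12Aux.sum_onesQ]; push_cast; ring⟩
        · exact ⟨-2, by rw [Stmt12Aux.sum_negOnesQ]; push_cast; ring⟩
        · exact ⟨0, by rw [Stmt12Aux.sum_vQ]; simp⟩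
    · exact Stmt12Aux.polar_eq m hm V hV P hP
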